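/- arXiv:2603.27427 — 4 statements merged into one kernel-verified Lean document; each statement's English description precedes it below -/
import Mathlib

section
/- (Matrix S-Lemma.) Let Π and Γ be real symmetric n×n matrices, and suppose there exists ζ₀ ∈ ℝⁿ with ζ₀ᵀ Γ ζ₀ > 0. Then the implication 'for all ζ ∈ ℝⁿ, ζᵀΓζ ≥ 0 implies ζᵀΠζ ≥ 0' holds if and only if there exists a real λ ≥ 0 such that Π − λΓ is positive semidefinite. -/
open Matrix

private lemma dot_symm {n : ℕ} (M : Matrix (Fin n) (Fin n) ℝ) (hM : M.IsSymm)
    (x y : Fin n → ℝ) : x ⬝ᵥ M *ᵥ y = y ⬝ᵥ M *ᵥ x := by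
  rw [Matrix.dotProduct_mulVec, ← Matrix.mulVec_transpose, hM, dotProduct_comm]

private lemma quad_expand {n : ℕ} (M : Matrix (Fin n) (Fin n) ℝ) (hM : M.IsSymm)
    (a b : ℝ) (x y : Fin n → ℝ) :
    (a • x + b • y) ⬝ᵥ M *ᵥ (a • x + b • y)
      = a^2 * (x ⬝ᵥ M *ᵥ x) + 2*a*b*(x ⬝ᵥ M *ᵥ y) + b^2 * (y ⬝ᵥ M *ᵥ y) := by
  simp only [Matrix.mulVec_add, Matrix.mulVec_smul, dotProduct_add, add_dotProduct,
    dotProduct_smul, smul_dotProduct, smul_eq_mul, dot_symm M hM y x]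
  ring

/-- key additive lemma: if `g x + g y = 0` with `g x ≤ 0 ≤ g y`, then `p x + p y ≥ 0`. -/
private lemma key_add {n : ℕ} (Pi Gam : Matrix (Fin n) (Fin n) ℝ)
    (hPi : Pi.IsSymm) (hGam : Gam.IsSymm)
    (hyp : ∀ ζ : Fin n → ℝ, 0 ≤ ζ ⬝ᵥ Gam *ᵥ ζ → 0 ≤ ζ ⬝ᵥ Pi *ᵥ ζ)
    (x y : Fin n → ℝ) (hx : x ⬝ᵥ Gam *ᵥ x ≤ 0) (hy : 0 ≤ y ⬝ᵥ Gam *ᵥ y)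
    (hsum : x ⬝ᵥ Gam *ᵥ x + y ⬝ᵥ Gam *ᵥ y = 0) :
    0 ≤ x ⬝ᵥ Pi *ᵥ x + y ⬝ᵥ Pi *ᵥ y := by
  set f : ℝ → ℝ := fun θ =>
    Real.cos θ ^ 2 * (x ⬝ᵥ Gam *ᵥ x) + 2 * Real.cos θ * Real.sin θ * (x ⬝ᵥ Gam *ᵥ y)
      + Real.sin θ ^ 2 * (y ⬝ᵥ Gam *ᵥ y) with hf
  have hcont : Continuous f := by fun_prop
  have hf0 : f 0 = x ⬝ᵥ Gam *ᵥ x := by simp [hf]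
  have hf1 : f (Real.pi / 2) = y ⬝ᵥ Gam *ᵥ y := by simp [hf]
  have h0le : (0:ℝ) ≤ Real.pi / 2 := by positivity
  have : (0:ℝ) ∈ Set.Icc (f 0) (f (Real.pi / 2)) := by
    rw [hf0, hf1]; exact ⟨hx, hy⟩
  obtain ⟨θ, hθmem, hθ⟩ := intermediate_value_Icc h0le hcont.continuousOn this
  set z := Real.cos θ • x + Real.sin θ • y with hz
  set w := (-Real.sin θ) • x + Real.cos θ • y with hw
  have hgz : z ⬝ᵥ Gam *ᵥ z = 0 := by
    rw [hz, quad_expand Gam hGam]; exact hθ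
  have hpyth : Real.sin θ ^ 2 + Real.cos θ ^ 2 = 1 := Real.sin_sq_add_cos_sq θ
  have hgw : w ⬝ᵥ Gam *ᵥ w = 0 := by
    have h1 : z ⬝ᵥ Gam *ᵥ z + w ⬝ᵥ Gam *ᵥ w
        = x ⬝ᵥ Gam *ᵥ x + y ⬝ᵥ Gam *ᵥ y := by
      rw [hz, hw, quad_expand Gam hGam, quad_expand Gam hGam]
      linear_combination (x ⬝ᵥ Gam *ᵥ x + y ⬝ᵥ Gam *ᵥ y) * hpyth
    linarith [hgz, hsum, h1]
  have hpz : 0 ≤ z ⬝ᵥ Pi *ᵥ z := hyp z (le_of_eq hgz.symm)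
  have hpw : 0 ≤ w ⬝ᵥ Pi *ᵥ w := hyp w (le_of_eq hgw.symm)
  have h2 : z ⬝ᵥ Pi *ᵥ z + w ⬝ᵥ Pi *ᵥ w = x ⬝ᵥ Pi *ᵥ x + y ⬝ᵥ Pi *ᵥ y := by
    rw [hz, hw, quad_expand Pi hPi, quad_expand Pi hPi]
    linear_combination (x ⬝ᵥ Pi *ᵥ x + y ⬝ᵥ Pi *ᵥ y) * hpyth
  linarith

/-- key ratio lemma: if `g x < 0 < g y` then `p y * g x ≤ p x * g y`. -/
private lemma key_ratio {n : ℕ} (Pi Gam : Matrix (Fin n) (Fin n) ℝ)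
    (hPi : Pi.IsSymm) (hGam : Gam.IsSymm)
    (hyp : ∀ ζ : Fin n → ℝ, 0 ≤ ζ ⬝ᵥ Gam *ᵥ ζ → 0 ≤ ζ ⬝ᵥ Pi *ᵥ ζ)
    (x y : Fin n → ℝ) (hx : x ⬝ᵥ Gam *ᵥ x < 0) (hy : 0 < y ⬝ᵥ Gam *ᵥ y) :
    (y ⬝ᵥ Pi *ᵥ y) * (x ⬝ᵥ Gam *ᵥ x) ≤ (x ⬝ᵥ Pi *ᵥ x) * (y ⬝ᵥ Gam *ᵥ y) := by
  set s := Real.sqrt (y ⬝ᵥ Gam *ᵥ y) with hs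
  set t := Real.sqrt (-(x ⬝ᵥ Gam *ᵥ x)) with ht
  have hs2 : s ^ 2 = y ⬝ᵥ Gam *ᵥ y := Real.sq_sqrt hy.le
  have ht2 : t ^ 2 = -(x ⬝ᵥ Gam *ᵥ x) := Real.sq_sqrt (by linarith)
  have hq1 : (s • x) ⬝ᵥ Gam *ᵥ (s • x) = s^2 * (x ⬝ᵥ Gam *ᵥ x) := by
    have := quad_expand Gam hGam s 0 x x
    simpa using this
  have hq2 : (t • y) ⬝ᵥ Gam *ᵥ (t • y) = t^2 * (y ⬝ᵥ Gam *ᵥ y) := by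
    have := quad_expand Gam hGam t 0 y y
    simpa using this
  have hp1 : (s • x) ⬝ᵥ Pi *ᵥ (s • x) = s^2 * (x ⬝ᵥ Pi *ᵥ x) := by
    have := quad_expand Pi hPi s 0 x x
    simpa using this
  have hp2 : (t • y) ⬝ᵥ Pi *ᵥ (t • y) = t^2 * (y ⬝ᵥ Pi *ᵥ y) := by
    have := quad_expand Pi hPi t 0 y y
    simpa using this
  have h := key_add Pi Gam hPi hGam hyp (s • x) (t • y) ?_ ?_ ?_
  · rw [hp1, hp2, hs2, ht2] at h; nlinarith
  · rw [hq1, hs2]; nlinarith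
  · rw [hq2, ht2]; nlinarith
  · rw [hq1, hq2, hs2, ht2]; ring

/-- Matrix S-Lemma: for real symmetric matrices `Pi` and `Gam` such that `ζ₀ᵀ Γ ζ₀ > 0`
for some `ζ₀`, the implication `ζᵀΓζ ≥ 0 → ζᵀΠζ ≥ 0` holds for all `ζ` iff there exists
`λ ≥ 0` with `Π − λΓ ⪰ 0`. -/
theorem stmt_2 {n : ℕ} (Pi Gam : Matrix (Fin n) (Fin n) ℝ)
    (hPi : Pi.IsSymm) (hGam : Gam.IsSymm)
    (hstrict : ∃ ζ₀ : Fin n → ℝ, 0 < ζ₀ ⬝ᵥ Gam *ᵥ ζ₀) :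
    (∀ ζ : Fin n → ℝ, 0 ≤ ζ ⬝ᵥ Gam *ᵥ ζ → 0 ≤ ζ ⬝ᵥ Pi *ᵥ ζ) ↔
      ∃ lam : ℝ, 0 ≤ lam ∧ (Pi - lam • Gam).PosSemidef := by
  constructor
  · intro hyp
    obtain ⟨ζ₀, hζ₀⟩ := hstrict
    -- quadratic form of Pi - lam • Gam
    have hquad : ∀ (lam : ℝ) (x : Fin n → ℝ),
        x ⬝ᵥ (Pi - lam • Gam) *ᵥ x = x ⬝ᵥ Pi *ᵥ x - lam * (x ⬝ᵥ Gam *ᵥ x) := by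
      intro lam x
      simp [Matrix.sub_mulVec, Matrix.smul_mulVec, dotProduct_sub, dotProduct_smul,
        smul_eq_mul]
    by_cases hneg : ∃ x : Fin n → ℝ, x ⬝ᵥ Gam *ᵥ x < 0
    · obtain ⟨x₀, hx₀⟩ := hneg
      set T : Set ℝ := {r | ∃ x : Fin n → ℝ, x ⬝ᵥ Gam *ᵥ x < 0 ∧
          r = (x ⬝ᵥ Pi *ᵥ x) / (x ⬝ᵥ Gam *ᵥ x)} with hT
      have hTne : T.Nonempty := ⟨_, x₀, hx₀, rfl⟩
      have hub : ∀ y : Fin n → ℝ, 0 < y ⬝ᵥ Gam *ᵥ y →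
          ∀ r ∈ T, r ≤ (y ⬝ᵥ Pi *ᵥ y) / (y ⬝ᵥ Gam *ᵥ y) := by
        rintro y hy r ⟨x, hx, rfl⟩
        have hkey := key_ratio Pi Gam hPi hGam hyp x y hx hy
        rw [le_div_iff₀ hy, div_mul_eq_mul_div, div_le_iff_of_neg hx]
        exact hkey
      have hbdd : BddAbove T := ⟨_, hub ζ₀ hζ₀⟩
      set lam := max 0 (sSup T) with hlam
      refine ⟨lam, le_max_left _ _, Matrix.posSemidef_iff_dotProduct_mulVec.mpr ⟨?_, ?_⟩⟩
      · -- IsHermitian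
        rw [Matrix.IsHermitian, Matrix.conjTranspose_eq_transpose_of_trivial,
          Matrix.transpose_sub, Matrix.transpose_smul, hPi, hGam]
      · intro x
        rw [star_trivial, hquad lam x, sub_nonneg]
        rcases lt_trichotomy (x ⬝ᵥ Gam *ᵥ x) 0 with h | h | h
        · have hmem : (x ⬝ᵥ Pi *ᵥ x) / (x ⬝ᵥ Gam *ᵥ x) ∈ T := ⟨x, h, rfl⟩
          have h1 : (x ⬝ᵥ Pi *ᵥ x) / (x ⬝ᵥ Gam *ᵥ x) ≤ lam :=
            le_trans (le_csSup hbdd hmem) (le_max_right _ _)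
          calc lam * (x ⬝ᵥ Gam *ᵥ x)
              ≤ (x ⬝ᵥ Pi *ᵥ x) / (x ⬝ᵥ Gam *ᵥ x) * (x ⬝ᵥ Gam *ᵥ x) := by
                exact mul_le_mul_of_nonpos_right h1 h.le
            _ = x ⬝ᵥ Pi *ᵥ x := div_mul_cancel₀ _ (ne_of_lt h)
        · rw [h, mul_zero]; exact hyp x h.ge
        · have hlamle : lam ≤ (x ⬝ᵥ Pi *ᵥ x) / (x ⬝ᵥ Gam *ᵥ x) := by
            apply max_le
            · exact div_nonneg (hyp x h.le) h.le
            · exact csSup_le hTne (hub x h)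
          calc lam * (x ⬝ᵥ Gam *ᵥ x)
              ≤ (x ⬝ᵥ Pi *ᵥ x) / (x ⬝ᵥ Gam *ᵥ x) * (x ⬝ᵥ Gam *ᵥ x) :=
                mul_le_mul_of_nonneg_right hlamle h.le
            _ = x ⬝ᵥ Pi *ᵥ x := div_mul_cancel₀ _ (ne_of_gt h)
    · push_neg at hneg
      refine ⟨0, le_refl _, Matrix.posSemidef_iff_dotProduct_mulVec.mpr ⟨?_, ?_⟩⟩
      · rw [Matrix.IsHermitian, Matrix.conjTranspose_eq_transpose_of_trivial,
          Matrix.transpose_sub, Matrix.transpose_smul, hPi, hGam]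
      · intro x
        rw [star_trivial, hquad 0 x]
        simpa using hyp x (hneg x)
  · rintro ⟨lam, hlam, hpsd⟩ ζ hζ
    have h := (Matrix.posSemidef_iff_dotProduct_mulVec.mp hpsd).2 ζ
    rw [star_trivial] at h
    have hq : ζ ⬝ᵥ (Pi - lam • Gam) *ᵥ ζ
        = ζ ⬝ᵥ Pi *ᵥ ζ - lam * (ζ ⬝ᵥ Gam *ᵥ ζ) := by
      simp [Matrix.sub_mulVec, Matrix.smul_mulVec, dotProduct_sub, dotProduct_smul,
        smul_eq_mul]
    nlinarith [mul_nonneg hlam hζ]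
end

section
/- Let A ∈ ℝ^{n×n}, B ∈ ℝ^{n×q}, C ∈ ℝ^{m×n}, D ∈ ℝ^{m×q}, let P ∈ ℝ^{n×n} be symmetric positive definite, and let X¹¹ ∈ ℝ^{q×q}, X²² ∈ ℝ^{m×m} be symmetric with X¹² ∈ ℝ^{q×m}, X²¹ = (X¹²)ᵀ. Suppose the block matrix [[−(PA + AᵀP) + CᵀX²²C, −PB + CᵀX²¹ + CᵀX²²D], [(−PB + CᵀX²¹ + CᵀX²²D)ᵀ, X¹¹ + X¹²D + DᵀX²¹ + DᵀX²²D]] is positive semidefinite. Then for every differentiable trajectory x : ℝ → ℝⁿ and continuous input u : ℝ → ℝ^q satisfying x′(t) = A x(t) + B u(t) for all t, the storage function V(t) = x(t)ᵀ P x(t) satisfies V′(t) ≤ u(t)ᵀX¹¹u(t) + 2u(t)ᵀX¹²y(t) + y(t)ᵀX²²y(t) for all t, where y(t) = C x(t) + D u(t). -/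
open Matrix

private lemma td' {k l : Type*} [Fintype k] [Fintype l] (M : Matrix k l ℝ) (a : l → ℝ) (b : k → ℝ) :
    a ⬝ᵥ Mᵀ *ᵥ b = b ⬝ᵥ M *ᵥ a := by
  rw [dotProduct_mulVec, vecMul_transpose, dotProduct_comm]

private lemma tdl' {k l : Type*} [Fintype k] [Fintype l] (M : Matrix k l ℝ) (a : k → ℝ) (b : l → ℝ) :
    (Mᵀ *ᵥ a) ⬝ᵥ b = a ⬝ᵥ M *ᵥ b := by
  rw [dotProduct_comm, td']

private lemma sdot' {k : Type*} [Fintype k] {M : Matrix k k ℝ} (h : Mᵀ = M)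
    (a b : k → ℝ) : (M *ᵥ a) ⬝ᵥ b = a ⬝ᵥ M *ᵥ b := by
  conv_rhs => rw [← h]
  rw [td']
  exact dotProduct_comm _ _

private lemma scomm' {k : Type*} [Fintype k] {M : Matrix k k ℝ} (h : Mᵀ = M)
    (a b : k → ℝ) : a ⬝ᵥ M *ᵥ b = b ⬝ᵥ M *ᵥ a := by
  rw [← td' M b a, h]

/-- If the dissipativity LMI holds, then along every differentiable trajectory of the LTI
system `ẋ = Ax + Bu` (with continuous input `u`), the storage function `V(t) = x(t)ᵀPx(t)`
satisfies `V′(t) ≤ u(t)ᵀX¹¹u(t) + 2u(t)ᵀX¹²y(t) + y(t)ᵀX²²y(t)` with `y = Cx + Du`. -/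
theorem stmt_5 {n q m : ℕ}
    (A : Matrix (Fin n) (Fin n) ℝ) (B : Matrix (Fin n) (Fin q) ℝ)
    (C : Matrix (Fin m) (Fin n) ℝ) (D : Matrix (Fin m) (Fin q) ℝ)
    (P : Matrix (Fin n) (Fin n) ℝ) (hP : P.PosDef)
    (X11 : Matrix (Fin q) (Fin q) ℝ) (X22 : Matrix (Fin m) (Fin m) ℝ)
    (X12 : Matrix (Fin q) (Fin m) ℝ) (X21 : Matrix (Fin m) (Fin q) ℝ)
    (hX11 : X11.IsSymm) (hX22 : X22.IsSymm) (hX21 : X21 = X12ᵀ)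
    (hLMI : (Matrix.fromBlocks
        (-(P * A + Aᵀ * P) + Cᵀ * X22 * C)
        (-(P * B) + Cᵀ * X21 + Cᵀ * X22 * D)
        (-(P * B) + Cᵀ * X21 + Cᵀ * X22 * D)ᵀ
        (X11 + X12 * D + Dᵀ * X21 + Dᵀ * X22 * D)).PosSemidef)
    (x : ℝ → Fin n → ℝ) (u : ℝ → Fin q → ℝ)
    (hu : Continuous u)
    (hx : ∀ t : ℝ, HasDerivAt x (A *ᵥ x t + B *ᵥ u t) t) :
    ∀ t : ℝ,
      deriv (fun s => x s ⬝ᵥ P *ᵥ x s) t ≤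
        u t ⬝ᵥ X11 *ᵥ u t + 2 * (u t ⬝ᵥ X12 *ᵥ (C *ᵥ x t + D *ᵥ u t)) +
          (C *ᵥ x t + D *ᵥ u t) ⬝ᵥ X22 *ᵥ (C *ᵥ x t + D *ᵥ u t) := by
  intro t
  -- compute the derivative of the storage function
  have hV : HasDerivAt (fun s => x s ⬝ᵥ P *ᵥ x s)
      ((A *ᵥ x t + B *ᵥ u t) ⬝ᵥ P *ᵥ x t + x t ⬝ᵥ P *ᵥ (A *ᵥ x t + B *ᵥ u t)) t := by
    set x' : Fin n → ℝ := A *ᵥ x t + B *ᵥ u t with hx'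
    have hxc : ∀ i, HasDerivAt (fun s => x s i) (x' i) t := fun i => hasDerivAt_pi.mp (hx t) i
    have h1 : HasDerivAt (fun s => ∑ i, ∑ j, x s i * (P i j * x s j))
        (∑ i, ∑ j, (x' i * (P i j * x t j) + x t i * (P i j * x' j))) t := by
      apply HasDerivAt.fun_sum
      intro i _
      apply HasDerivAt.fun_sum
      intro j _
      exact (hxc i).mul ((hxc j).const_mul _)
    have h2 : (fun s => ∑ i, ∑ j, x s i * (P i j * x s j)) = fun s => x s ⬝ᵥ P *ᵥ x s := by
      funext s
      simp [dotProduct, mulVec, Finset.mul_sum]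
    have h3 : (∑ i, ∑ j, (x' i * (P i j * x t j) + x t i * (P i j * x' j)))
        = x' ⬝ᵥ P *ᵥ x t + x t ⬝ᵥ P *ᵥ x' := by
      simp [dotProduct, mulVec, Finset.mul_sum, Finset.sum_add_distrib]
    rw [← h2, ← h3]
    exact h1
  rw [hV.deriv]
  set v : Fin n → ℝ := x t
  set w : Fin q → ℝ := u t
  have hPs : Pᵀ = P := (by simpa using hP.1 : P.IsSymm).eq
  have key := (posSemidef_iff_dotProduct_mulVec.mp hLMI).2 (Sum.elim v w)
  subst hX21
  simp only [star_trivial, fromBlocks_mulVec, sumElim_dotProduct_sumElim, Sum.elim_comp_inl,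
    Sum.elim_comp_inr, add_mulVec, neg_mulVec, dotProduct_add, dotProduct_neg,
    transpose_add, transpose_neg, Matrix.transpose_mul, transpose_transpose,
    ← mulVec_mulVec] at key
  simp only [hX22.eq, hPs, td', tdl', sdot' hX22.eq, sdot' hPs] at key
  simp only [add_dotProduct, dotProduct_add, mulVec_add, scomm' hPs (A *ᵥ v),
    scomm' hPs (B *ᵥ w)]
  have e1 : (C *ᵥ v) ⬝ᵥ X22 *ᵥ (D *ᵥ w) = (D *ᵥ w) ⬝ᵥ X22 *ᵥ (C *ᵥ v) := scomm' hX22.eq _ _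
  linarith [key, e1]
end

section
/- (Line dissipativity LMI: maximality of the passivity indices.) Let R_l > 0 and L_l > 0, and suppose P̄ > 0, ν̄, ρ̄ ∈ ℝ are such that the 2×2 symmetric matrix W(P̄, ν̄, ρ̄) = [[2P̄R_l/L_l − ρ̄, −P̄/L_l + 1/2], [−P̄/L_l + 1/2, −ν̄]] is positive semidefinite. Then ν̄ ≤ 0; moreover, if ν̄ = 0, then necessarily P̄ = L_l/2 and ρ̄ ≤ R_l. Hence the maximum feasible values are ν̄ = 0 and ρ̄ = R_l, attained at P̄ = L_l/2. -/
open Matrix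

/-- Line dissipativity LMI, maximality of the passivity indices: if `P̄ > 0` and
`W(P̄, ν̄, ρ̄) ⪰ 0`, then `ν̄ ≤ 0`; and if `ν̄ = 0`, then `P̄ = L_l/2` and `ρ̄ ≤ R_l`. -/
theorem stmt_10 (Rl Ll : ℝ) (hRl : 0 < Rl) (hLl : 0 < Ll)
    (Pbar nubar rhobar : ℝ) (hPbar : 0 < Pbar)
    (hW : (!![2 * Pbar * Rl / Ll - rhobar, -(Pbar / Ll) + 1 / 2;
              -(Pbar / Ll) + 1 / 2, -nubar] : Matrix (Fin 2) (Fin 2) ℝ).PosSemidef) :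
    nubar ≤ 0 ∧ (nubar = 0 → Pbar = Ll / 2 ∧ rhobar ≤ Rl) := by
  set a := 2 * Pbar * Rl / Ll - rhobar with ha
  set b := -(Pbar / Ll) + 1 / 2 with hb
  have key : ∀ t : ℝ, 0 ≤ a + 2 * b * t + (-nubar) * t ^ 2 := by
    intro t
    have h := hW.dotProduct_mulVec_nonneg ![1, t]
    simp [dotProduct, Matrix.mulVec, Fin.sum_univ_two] at h
    nlinarith [h]
  have h00 : 0 ≤ a := by have := key 0; nlinarith
  have h11 : 0 ≤ -nubar := by
    have h := hW.dotProduct_mulVec_nonneg ![0, 1]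
    simp [dotProduct, Matrix.mulVec, Fin.sum_univ_two] at h
    nlinarith [h]
  refine ⟨by linarith, fun hnu => ?_⟩
  have hbz : b = 0 := by
    by_contra hbne
    have hb2 : 0 < b ^ 2 := by positivity
    have h := key (-(a + 1) * b / (2 * b ^ 2))
    rw [hnu] at h
    have : a + 2 * b * (-(a + 1) * b / (2 * b ^ 2)) = -1 := by
      field_simp; ring
    rw [this] at h; linarith [h]
  have hP : Pbar = Ll / 2 := by
    have h0 : -(Pbar / Ll) + 1 / 2 = 0 := hb.symm.trans hbz
    have : Pbar / Ll = 1 / 2 := by linarith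
    field_simp at this; linarith
  refine ⟨hP, ?_⟩
  have : 2 * Pbar * Rl / Ll = Rl := by rw [hP]; field_simp
  rw [ha, this] at h00; linarith
end

section
/- (CPL sector-bounded quadratic constraint.) Let P_L > 0, C > 0, and 0 < V_min ≤ V_r ≤ V_max, and let g(ṽ) = (P_L/C)(1/V_r − 1/(ṽ + V_r)) with α = P_L/(C·V_max²) and β = P_L/(C·V_min²). Then for every real ṽ with V_min − V_r ≤ ṽ ≤ V_max − V_r and ṽ ≠ 0, the quadratic constraint −αβ·ṽ² + (α + β)·ṽ·g(ṽ) − g(ṽ)² ≥ 0 holds; equivalently, [ṽ; g(ṽ)]ᵀ [[−αβ, (α+β)/2], [(α+β)/2, −1]] [ṽ; g(ṽ)] ≥ 0. -/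
open Matrix

/-- CPL sector-bounded quadratic constraint: for all nonzero
`ṽ ∈ [V_min − V_r, V_max − V_r]`, `−αβ·ṽ² + (α+β)·ṽ·g(ṽ) − g(ṽ)² ≥ 0`; equivalently
`[ṽ; g(ṽ)]ᵀ [[−αβ, (α+β)/2], [(α+β)/2, −1]] [ṽ; g(ṽ)] ≥ 0`. -/
theorem stmt_12 (P_L C V_min V_max V_r : ℝ)
    (hPL : 0 < P_L) (hC : 0 < C) (hVmin : 0 < V_min)
    (h1 : V_min ≤ V_r) (h2 : V_r ≤ V_max) :
    let g : ℝ → ℝ := fun v => (P_L / C) * (1 / V_r - 1 / (v + V_r))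
    let α : ℝ := P_L / (C * V_max ^ 2)
    let β : ℝ := P_L / (C * V_min ^ 2)
    ∀ v : ℝ, V_min - V_r ≤ v → v ≤ V_max - V_r → v ≠ 0 →
      (-(α * β) * v ^ 2 + (α + β) * v * g v - (g v) ^ 2 ≥ 0) ∧
      (0 ≤ ![v, g v] ⬝ᵥ
        (!![-(α * β), (α + β) / 2; (α + β) / 2, -1] : Matrix (Fin 2) (Fin 2) ℝ) *ᵥ
          ![v, g v]) := by
  intro g α β v hl hr hv0
  have hVr : 0 < V_r := lt_of_lt_of_le hVmin h1
  have hVmax : 0 < V_max := lt_of_lt_of_le hVmin (h1.trans h2)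
  have hw : 0 < v + V_r := by linarith
  have hg : g v = (P_L / C) * v / (V_r * (v + V_r)) := by
    show (P_L / C) * (1 / V_r - 1 / (v + V_r)) = _
    field_simp
    ring
  have hub : V_r * (v + V_r) ≤ V_max ^ 2 := by nlinarith
  have hlb : V_min ^ 2 ≤ V_r * (v + V_r) := by nlinarith
  have key : (g v - α * v) * (β * v - g v) =
      v ^ 2 * (P_L / C) ^ 2 *
        ((V_max ^ 2 - V_r * (v + V_r)) * (V_r * (v + V_r) - V_min ^ 2)) /
        ((V_r * (v + V_r)) ^ 2 * V_max ^ 2 * V_min ^ 2) := by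
    rw [hg]
    show ((P_L / C) * v / (V_r * (v + V_r)) - P_L / (C * V_max ^ 2) * v) *
        (P_L / (C * V_min ^ 2) * v - (P_L / C) * v / (V_r * (v + V_r))) = _
    field_simp
  have h1' : 0 ≤ (g v - α * v) * (β * v - g v) := by
    rw [key]
    apply div_nonneg
    · apply mul_nonneg (by positivity)
      exact mul_nonneg (by linarith) (by linarith)
    · positivity
  have hmain : -(α * β) * v ^ 2 + (α + β) * v * g v - (g v) ^ 2 ≥ 0 := by
    nlinarith [h1']
  refine ⟨hmain, ?_⟩
  have heq : ![v, g v] ⬝ᵥ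
      (!![-(α * β), (α + β) / 2; (α + β) / 2, -1] : Matrix (Fin 2) (Fin 2) ℝ) *ᵥ
        ![v, g v] = -(α * β) * v ^ 2 + (α + β) * v * g v - (g v) ^ 2 := by
    simp [dotProduct, Matrix.mulVec, Fin.sum_univ_two]
    ring
  rw [heq]
  exact hmain
end
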